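/- The (xA)-adic completion A* of A is equal to R* = k[y,z]_{(y,z)}[[x]], and the extended ideal PA* = (f,g)R* is not an integrally closed ideal of R*. -/

import Mathlib

set_option synthInstance.maxHeartbeats 1000000
set_option maxHeartbeats 1000000


noncomputable section

open PowerSeries

variable (k : Type) [Field k]

abbrev P2 (k : Type) [Field k] := MvPolynomial (Fin 2) k

def mP : Ideal (P2 k) := RingHom.ker (MvPolynomial.aeval (R := k) (fun _ : Fin 2 => (0:k))).toRingHom

instance : (mP k).IsPrime := RingHom.ker_isPrime _

abbrev Rloc (k : Type) [Field k] := Localization.AtPrime (mP k)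

abbrev Rstar (k : Type) [Field k] := PowerSeries (Rloc k)

def kk : k →+* Rstar k :=
  (PowerSeries.C : Rloc k →+* Rstar k).comp ((algebraMap (P2 k) (Rloc k)).comp (algebraMap k (P2 k)))

def xx : Rstar k := PowerSeries.X
def yy : Rstar k := PowerSeries.C (algebraMap (P2 k) (Rloc k) (MvPolynomial.X 0))
def zz : Rstar k := PowerSeries.C (algebraMap (P2 k) (Rloc k) (MvPolynomial.X 1))

def emb : PowerSeries k →+* Rstar k :=
  PowerSeries.map ((algebraMap (P2 k) (Rloc k)).comp (algebraMap k (P2 k)))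

variable (α β : PowerSeries k)

def ff : Rstar k := (yy k - emb k α) ^ 2
def gg : Rstar k := (zz k - emb k β) ^ 2

abbrev K (k : Type) [Field k] := FractionRing (Rstar k)

def ι : Rstar k →+* K k := algebraMap _ _

/-- The subfield `k(x,y,z,f,g)` of the fraction field of `R*`. -/
def LL : Subfield (K k) :=
  Subfield.closure (Set.range ((ι k).comp (kk k)) ∪
    {ι k (xx k), ι k (yy k), ι k (zz k), ι k (ff k α), ι k (gg k β)})

/-- `A = k(x,y,z,f,g) ∩ R*`, as a subring of `R*`. -/
def AA : Subring (Rstar k) := Subring.comap (ι k) (LL k α β).toSubring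

lemma ff_mem : ff k α ∈ AA k α β := by
  refine Subfield.subset_closure ?_
  simp [Set.mem_union]

lemma gg_mem : gg k β ∈ AA k α β := by
  refine Subfield.subset_closure ?_
  simp [Set.mem_union]

lemma xx_mem : xx k ∈ AA k α β := by
  refine Subfield.subset_closure ?_
  simp [Set.mem_union]

def fA : AA k α β := ⟨ff k α, ff_mem k α β⟩
def gA : AA k α β := ⟨gg k β, gg_mem k α β⟩

def PP : Ideal (AA k α β) := Ideal.span {fA k α β, gA k α β}

/-- `r` is integral over the ideal `I`: it satisfies a monic equation
`r^n + a₁ r^(n-1) + ⋯ + aₙ = 0` with `aᵢ ∈ Iⁱ`. -/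
def IsIntegralOverIdeal {R : Type*} [CommRing R] (I : Ideal R) (r : R) : Prop :=
  ∃ n : ℕ, 0 < n ∧ ∃ a : ℕ → R, (∀ i ∈ Finset.Icc 1 n, a i ∈ I ^ i) ∧
    r ^ n + ∑ i ∈ Finset.Icc 1 n, a i * r ^ (n - i) = 0

/-- An ideal is integrally closed if every element integral over it belongs to it. -/
def IsIntegrallyClosedIdeal {R : Type*} [CommRing R] (I : Ideal R) : Prop :=
  ∀ r : R, IsIntegralOverIdeal I r → r ∈ I

lemma constCoeff_emb (γ : PowerSeries k) (hγ : PowerSeries.constantCoeff γ = 0) :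
    PowerSeries.constantCoeff (emb k γ) = 0 := by
  rw [emb, ← PowerSeries.coeff_zero_eq_constantCoeff_apply, PowerSeries.coeff_map,
    PowerSeries.coeff_zero_eq_constantCoeff_apply, hγ, map_zero]

lemma not_in_span (hα' : PowerSeries.constantCoeff α = 0)
    (hβ' : PowerSeries.constantCoeff β = 0) : ((yy k - emb k α) * (zz k - emb k β)) ∉
    Ideal.span ({ff k α, gg k β} : Set (Rstar k)) := by
  intro h
  obtain ⟨a, b, hab⟩ := Ideal.mem_span_pair.mp h
  set Y : Rloc k := algebraMap (P2 k) (Rloc k) (MvPolynomial.X 0) with hY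
  set Z : Rloc k := algebraMap (P2 k) (Rloc k) (MvPolynomial.X 1) with hZ
  have key : PowerSeries.constantCoeff a * Y^2
      + PowerSeries.constantCoeff b * Z^2 = Y * Z := by
    have := congrArg (PowerSeries.constantCoeff) hab
    simp only [map_add, map_mul, map_sub, map_pow, ff, gg, yy, zz,
      PowerSeries.constantCoeff_C, constCoeff_emb k α hα', constCoeff_emb k β hβ',
      sub_zero] at this
    exact this
  set A0 := PowerSeries.constantCoeff a
  set B0 := PowerSeries.constantCoeff b
  obtain ⟨⟨p, s⟩, hp⟩ := IsLocalization.surj (mP k).primeCompl A0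
  obtain ⟨⟨q, t⟩, hq⟩ := IsLocalization.surj (mP k).primeCompl B0
  have hinj : Function.Injective (algebraMap (P2 k) (Rloc k)) :=
    IsLocalization.injective _ (mP k).primeCompl_le_nonZeroDivisors
  have hpoly : (MvPolynomial.X 0 * MvPolynomial.X 1) * ((s : P2 k) * (t : P2 k))
      = (p * (t : P2 k)) * (MvPolynomial.X 0)^2 + (q * (s : P2 k)) * (MvPolynomial.X 1)^2 := by
    apply hinj
    simp only [map_mul, map_add, map_pow]
    rw [← hY, ← hZ, ← hp, ← hq]
    rw [← key]
    ring
  -- compare coefficients of the monomial y z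
  have hc := congrArg (MvPolynomial.coeff (Finsupp.single (0 : Fin 2) 1 + Finsupp.single 1 1)) hpoly
  have h01 : (0 : Fin 2) ≠ 1 := by decide
  have hsupp : (0 : Fin 2) ∉ (Finsupp.single (1 : Fin 2) 1).support := by
    simp [Finsupp.support_single_ne_zero, h01.symm]
  have lhs_eq : MvPolynomial.coeff (Finsupp.single (0 : Fin 2) 1 + Finsupp.single 1 1)
      ((MvPolynomial.X 0 * MvPolynomial.X 1) * ((s : P2 k) * (t : P2 k)))
      = MvPolynomial.coeff 0 ((s : P2 k) * (t : P2 k)) := by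
    rw [show (MvPolynomial.X (0:Fin 2) * MvPolynomial.X 1) * ((s : P2 k) * (t : P2 k))
        = (((s : P2 k) * (t : P2 k)) * MvPolynomial.X 0) * MvPolynomial.X 1 by ring]
    rw [MvPolynomial.coeff_mul_X, MvPolynomial.coeff_mul_X' (Finsupp.single (0:Fin 2) 1)]
    simp [Finsupp.support_single_ne_zero]
  have rhs1 : MvPolynomial.coeff (Finsupp.single (0 : Fin 2) 1 + Finsupp.single 1 1)
      ((p * (t : P2 k)) * (MvPolynomial.X (0:Fin 2))^2) = 0 := by
    rw [show (p * (t : P2 k)) * (MvPolynomial.X (0:Fin 2))^2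
        = ((p * (t : P2 k)) * MvPolynomial.X 0) * MvPolynomial.X 0 by ring]
    rw [add_comm (Finsupp.single (0:Fin 2) 1), MvPolynomial.coeff_mul_X,
      MvPolynomial.coeff_mul_X']
    simp [Finsupp.support_single_ne_zero, h01]
  have rhs2 : MvPolynomial.coeff (Finsupp.single (0 : Fin 2) 1 + Finsupp.single 1 1)
      ((q * (s : P2 k)) * (MvPolynomial.X (1:Fin 2))^2) = 0 := by
    rw [show (q * (s : P2 k)) * (MvPolynomial.X (1:Fin 2))^2
        = ((q * (s : P2 k)) * MvPolynomial.X 1) * MvPolynomial.X 1 by ring]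
    rw [MvPolynomial.coeff_mul_X, MvPolynomial.coeff_mul_X']
    simp [Finsupp.support_single_ne_zero, h01.symm]
  rw [lhs_eq, MvPolynomial.coeff_add, rhs1, rhs2, add_zero] at hc
  -- constant coefficient of s*t is nonzero
  have hs : MvPolynomial.constantCoeff (s : P2 k) ≠ 0 := by
    have := s.2
    simp only [Ideal.primeCompl, Submonoid.mem_mk, Subsemigroup.mem_mk, Set.mem_compl_iff,
      SetLike.mem_coe, mP, RingHom.mem_ker, AlgHom.toRingHom_eq_coe, RingHom.coe_coe] at this
    rwa [MvPolynomial.aeval_zero'] at this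
  have ht : MvPolynomial.constantCoeff (t : P2 k) ≠ 0 := by
    have := t.2
    simp only [Ideal.primeCompl, Submonoid.mem_mk, Subsemigroup.mem_mk, Set.mem_compl_iff,
      SetLike.mem_coe, mP, RingHom.mem_ker, AlgHom.toRingHom_eq_coe, RingHom.coe_coe] at this
    rwa [MvPolynomial.aeval_zero'] at this
  rw [show (MvPolynomial.coeff 0 ((s:P2 k) * (t:P2 k)))
      = MvPolynomial.constantCoeff ((s:P2 k) * (t:P2 k)) from rfl, map_mul] at hc
  exact mul_ne_zero hs ht hc
lemma map_PP_eq : Ideal.map (AA k α β).subtype (PP k α β)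
    = Ideal.span ({ff k α, gg k β} : Set (Rstar k)) := by
  rw [PP, Ideal.map_span, Set.image_pair]
  rfl

lemma second_part (hα' : PowerSeries.constantCoeff α = 0)
    (hβ' : PowerSeries.constantCoeff β = 0) :
    ¬ IsIntegrallyClosedIdeal (Ideal.map (AA k α β).subtype (PP k α β)) := by
  intro hcl
  set I := Ideal.map (AA k α β).subtype (PP k α β) with hI
  have hfI : ff k α ∈ I := by
    rw [hI, map_PP_eq]; exact Ideal.subset_span (by simp)
  have hgI : gg k β ∈ I := by
    rw [hI, map_PP_eq]; exact Ideal.subset_span (by simp)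
  set r : Rstar k := (yy k - emb k α) * (zz k - emb k β) with hr
  have hint : IsIntegralOverIdeal I r := by
    refine ⟨2, by norm_num, fun i => if i = 2 then -(ff k α * gg k β) else 0, ?_, ?_⟩
    · intro i hi
      simp only [Finset.mem_Icc] at hi
      obtain ⟨h1, h2⟩ := hi
      rcases Nat.eq_or_lt_of_le h2 with h | h
      · subst h
        simp only [if_pos rfl]
        exact neg_mem (by rw [sq]; exact Ideal.mul_mem_mul hfI hgI)
      · have : i = 1 := by omega
        subst this
        simp
    · have hIcc : (Finset.Icc 1 2 : Finset ℕ) = {1, 2} := rfl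
      rw [hIcc]
      rw [Finset.sum_insert (by decide), Finset.sum_singleton]
      have : r ^ 2 = ff k α * gg k β := by rw [hr, ff, gg]; ring
      simp [this]
  have := hcl r hint
  rw [hI, map_PP_eq] at this
  exact not_in_span k α β hα' hβ' this
lemma iota_inj : Function.Injective (ι k) := IsFractionRing.injective (Rstar k) (K k)

lemma mem_AA_iff (r : Rstar k) : r ∈ AA k α β ↔ ι k r ∈ LL k α β := Iff.rfl

/-- polynomial images are in LL -/
lemma poly_mem_LL (p : P2 k) :
    ι k (PowerSeries.C (algebraMap (P2 k) (Rloc k) p)) ∈ LL k α β := by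
  induction p using MvPolynomial.induction_on with
  | C a =>
      apply Subfield.subset_closure
      left
      exact ⟨a, rfl⟩
  | add p q hp hq => simp only [map_add]; exact add_mem hp hq
  | mul_X p i hp =>
      simp only [map_mul]
      refine mul_mem hp ?_
      apply Subfield.subset_closure
      right
      fin_cases i
      · right; left
        rfl
      · right; right; left
        rfl

lemma C_mem_AA (c : Rloc k) : (PowerSeries.C c : Rstar k) ∈ AA k α β := by
  rw [mem_AA_iff]
  obtain ⟨⟨p, s⟩, h⟩ := IsLocalization.surj (mP k).primeCompl c
  have hs0 : algebraMap (P2 k) (Rloc k) (s : P2 k) ≠ 0 := by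
    have := IsLocalization.map_units (Rloc k) s
    exact this.ne_zero
  have hs0' : ι k (PowerSeries.C (algebraMap (P2 k) (Rloc k) (s : P2 k))) ≠ 0 := by
    intro hz
    apply hs0
    apply PowerSeries.C_injective
    apply iota_inj k
    rw [hz, map_zero, map_zero]
  have heq : ι k (PowerSeries.C c)
      * ι k (PowerSeries.C (algebraMap (P2 k) (Rloc k) (s : P2 k)))
      = ι k (PowerSeries.C (algebraMap (P2 k) (Rloc k) p)) := by
    rw [← map_mul, ← map_mul, h]
  have : ι k (PowerSeries.C c)
      = ι k (PowerSeries.C (algebraMap (P2 k) (Rloc k) p))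
      * (ι k (PowerSeries.C (algebraMap (P2 k) (Rloc k) (s : P2 k))))⁻¹ := by
    field_simp [← heq]
    exact heq
  rw [this]
  exact mul_mem (poly_mem_LL k α β p) (inv_mem (poly_mem_LL k α β (s : P2 k)))

lemma X_ne_zero' : (PowerSeries.X : Rstar k) ≠ 0 := PowerSeries.X_ne_zero

/-- key: if a ∈ A and Xⁿ divides a in R*, the quotient is in A -/
lemma quot_mem_AA (a : Rstar k) (ha : a ∈ AA k α β) (n : ℕ) (r : Rstar k)
    (hr : a = (PowerSeries.X : Rstar k) ^ n * r) : r ∈ AA k α β := by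
  rw [mem_AA_iff]
  have hx0 : ι k ((PowerSeries.X : Rstar k) ^ n) ≠ 0 := by
    intro hz
    exact pow_ne_zero n (X_ne_zero' k) (iota_inj k (by rw [hz, map_zero]))
  have heq : ι k a = ι k ((PowerSeries.X : Rstar k) ^ n) * ι k r := by
    rw [← map_mul, hr]
  have : ι k r = ι k a * (ι k ((PowerSeries.X : Rstar k) ^ n))⁻¹ := by
    rw [heq, mul_comm (ι k ((PowerSeries.X : Rstar k) ^ n)), mul_assoc,
      mul_inv_cancel₀ hx0, mul_one]
  rw [this]
  refine mul_mem ha (inv_mem ?_)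
  rw [map_pow]
  exact pow_mem (Subfield.subset_closure (by right; left; rfl)) n
def TT (n : ℕ) (r : Rstar k) : Rstar k :=
  ∑ i ∈ Finset.range n, PowerSeries.C (PowerSeries.coeff i r)
    * PowerSeries.X ^ i

lemma coeff_TT (n : ℕ) (r : Rstar k) (j : ℕ) :
    PowerSeries.coeff j (TT k n r)
      = if j < n then PowerSeries.coeff j r else 0 := by
  rw [TT, map_sum]
  simp only [PowerSeries.coeff_C_mul, PowerSeries.coeff_X_pow, mul_ite, mul_one, mul_zero]
  by_cases h : j < n
  · rw [if_pos h, Finset.sum_eq_single j]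
    · simp
    · intro b _ hbj
      rw [if_neg (fun hh => hbj hh.symm)]
    · intro hj
      exact absurd (Finset.mem_range.2 h) hj
  · rw [if_neg h, Finset.sum_eq_zero]
    intro i hi
    rw [Finset.mem_range] at hi
    rw [if_neg (by omega)]

lemma TT_mem (n : ℕ) (r : Rstar k) : TT k n r ∈ AA k α β := by
  refine sum_mem fun i _ => mul_mem (C_mem_AA k α β _) (pow_mem (xx_mem k α β) i)

lemma X_pow_dvd_sub_TT (n : ℕ) (r : Rstar k) :
    (PowerSeries.X : Rstar k) ^ n ∣ r - TT k n r := by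
  rw [PowerSeries.X_pow_dvd_iff]
  intro m hm
  rw [map_sub, coeff_TT, if_pos hm, sub_self]

lemma TT_add (n : ℕ) (r s : Rstar k) : TT k n (r + s) = TT k n r + TT k n s := by
  rw [TT, TT, TT, ← Finset.sum_add_distrib]
  refine Finset.sum_congr rfl fun i _ => by rw [map_add, map_add, add_mul]

def JJ : Ideal (AA k α β) := Ideal.span {(⟨xx k, xx_mem k α β⟩ : AA k α β)}

lemma smul_top_JJ (n : ℕ) :
    ((JJ k α β) ^ n • ⊤ : Submodule (AA k α β) (AA k α β)) = ((JJ k α β) ^ n : Ideal _) := by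
  ext x
  simp

lemma mem_smul_top_iff (n : ℕ) (a : AA k α β) :
    a ∈ ((JJ k α β) ^ n • ⊤ : Submodule (AA k α β) (AA k α β))
      ↔ (PowerSeries.X : Rstar k) ^ n ∣ (a : Rstar k) := by
  rw [smul_top_JJ]
  rw [show ((JJ k α β) ^ n : Ideal _) = Ideal.span {(⟨xx k, xx_mem k α β⟩ : AA k α β) ^ n} from
    by rw [JJ, Ideal.span_singleton_pow]]
  rw [Ideal.mem_span_singleton]
  constructor
  · rintro ⟨c, hc⟩
    refine ⟨(c : Rstar k), ?_⟩
    have := congrArg (Subtype.val) hc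
    simpa [xx] using this
  · rintro ⟨r, hr⟩
    have hrA : r ∈ AA k α β := quot_mem_AA k α β (a : Rstar k) a.2 n r hr
    refine ⟨⟨r, hrA⟩, ?_⟩
    apply Subtype.ext
    simpa [xx] using hr

lemma mk_eq_mk_of_dvd (n : ℕ) (a b : AA k α β)
    (h : (PowerSeries.X : Rstar k) ^ n ∣ ((a : Rstar k) - (b : Rstar k))) :
    (Submodule.Quotient.mk a :
        AA k α β ⧸ ((JJ k α β) ^ n • ⊤ : Submodule (AA k α β) (AA k α β)))
      = Submodule.Quotient.mk b := by
  rw [Submodule.Quotient.eq]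
  rw [mem_smul_top_iff]
  exact h
def TA (n : ℕ) (r : Rstar k) : AA k α β := ⟨TT k n r, TT_mem k α β n r⟩

lemma X_pow_dvd_TT_sub_TT {m n : ℕ} (hmn : m ≤ n) (r : Rstar k) :
    (PowerSeries.X : Rstar k) ^ m ∣ TT k n r - TT k m r := by
  have d1 : (PowerSeries.X : Rstar k) ^ m ∣ r - TT k n r :=
    dvd_trans (pow_dvd_pow _ hmn) (X_pow_dvd_sub_TT k n r)
  have d2 := X_pow_dvd_sub_TT k m r
  have : TT k n r - TT k m r = (r - TT k m r) - (r - TT k n r) := by ring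
  rw [this]
  exact dvd_sub d2 d1

lemma transition_mk (m n : ℕ) (hmn : m ≤ n) (a : AA k α β) :
    AdicCompletion.transitionMap (JJ k α β) (AA k α β) hmn (Submodule.Quotient.mk a)
      = Submodule.Quotient.mk a := rfl

def Ffun (r : Rstar k) : AdicCompletion (JJ k α β) (AA k α β) :=
  ⟨fun n => Submodule.Quotient.mk (TA k α β n r), by
    intro m n hmn
    rw [transition_mk]
    exact mk_eq_mk_of_dvd k α β m _ _ (X_pow_dvd_TT_sub_TT k hmn r)⟩

lemma Ffun_val (r : Rstar k) (n : ℕ) :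
    (Ffun k α β r).val n = Submodule.Quotient.mk (TA k α β n r) := rfl



lemma Ffun_add (r s : Rstar k) : Ffun k α β (r + s) = Ffun k α β r + Ffun k α β s := by
  apply AdicCompletion.ext
  intro n
  rw [AdicCompletion.val_add_apply, Ffun_val, Ffun_val, Ffun_val]
  have : TA k α β n (r + s) = TA k α β n r + TA k α β n s :=
    Subtype.ext (TT_add k n r s)
  rw [this, Submodule.Quotient.mk_add]

lemma Ffun_zero : Ffun k α β 0 = 0 := by
  apply AdicCompletion.ext
  intro n
  rw [Ffun_val, AdicCompletion.val_zero_apply]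
  have : TA k α β n 0 = 0 := by
    apply Subtype.ext
    simp [TA, TT]
  rw [this]
  exact Submodule.Quotient.mk_zero _

lemma Ffun_eq_of_mem (r : Rstar k) (hr : r ∈ AA k α β) (n : ℕ) :
    (Ffun k α β r).val n = Submodule.Quotient.mk (⟨r, hr⟩ : AA k α β) := by
  rw [Ffun_val]
  apply mk_eq_mk_of_dvd
  have : ((TA k α β n r : AA k α β) : Rstar k) - r = -(r - TT k n r) := by
    simp [TA]
  rw [this]
  exact dvd_neg.2 (X_pow_dvd_sub_TT k n r)

lemma Ffun_one : Ffun k α β 1 = 1 := by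
  apply AdicCompletion.ext
  intro n
  rw [Ffun_eq_of_mem k α β 1 (one_mem _) n, AdicCompletion.val_one]
  rfl

lemma Ffun_mul (r s : Rstar k) : Ffun k α β (r * s) = Ffun k α β r * Ffun k α β s := by
  apply AdicCompletion.ext
  intro n
  rw [AdicCompletion.val_mul, Ffun_val, Ffun_val, Ffun_val]
  have h1 : (Submodule.Quotient.mk (TA k α β n r) :
        AA k α β ⧸ ((JJ k α β) ^ n • ⊤ : Submodule (AA k α β) (AA k α β)))
      * Submodule.Quotient.mk (TA k α β n s)
      = Submodule.Quotient.mk (TA k α β n r * TA k α β n s) := rfl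
  rw [h1]
  apply mk_eq_mk_of_dvd
  have d1 := X_pow_dvd_sub_TT k n (r * s)
  have d2 := X_pow_dvd_sub_TT k n s
  have d3 := X_pow_dvd_sub_TT k n r
  have hcoe : ((TA k α β n (r * s) : AA k α β) : Rstar k)
      - ((TA k α β n r * TA k α β n s : AA k α β) : Rstar k)
      = -((r * s) - TT k n (r * s)) + (r * (s - TT k n s) + (r - TT k n r) * TT k n s) := by
    simp only [TA, MulMemClass.coe_mul]
    ring
  rw [hcoe]
  exact dvd_add (dvd_neg.2 d1) (dvd_add (Dvd.dvd.mul_left d2 r) (Dvd.dvd.mul_right d3 _))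

def F : Rstar k →+* AdicCompletion (JJ k α β) (AA k α β) where
  toFun := Ffun k α β
  map_one' := Ffun_one k α β
  map_mul' := Ffun_mul k α β
  map_zero' := Ffun_zero k α β
  map_add' := Ffun_add k α β


lemma F_inj : Function.Injective (F k α β) := by
  intro r s h
  have hval : ∀ n, (Ffun k α β r).val n = (Ffun k α β s).val n := by
    intro n
    rw [show Ffun k α β r = F k α β r from rfl, show Ffun k α β s = F k α β s from rfl, h]
  have hdvd : ∀ n : ℕ, (PowerSeries.X : Rstar k) ^ n ∣ r - s := by
    intro n
    have h1 := hval n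
    rw [Ffun_val, Ffun_val] at h1
    have h2 := (Submodule.Quotient.eq _).1 h1
    rw [mem_smul_top_iff] at h2
    have h3 : ((TA k α β n r - TA k α β n s : AA k α β) : Rstar k)
        = TT k n r - TT k n s := by simp [TA]
    rw [h3] at h2
    have : r - s = (r - TT k n r) - (s - TT k n s) + (TT k n r - TT k n s) := by ring
    rw [this]
    exact dvd_add (dvd_sub (X_pow_dvd_sub_TT k n r) (X_pow_dvd_sub_TT k n s)) h2
  have : r - s = 0 := by
    apply PowerSeries.ext
    intro m
    rw [map_zero]
    exact PowerSeries.X_pow_dvd_iff.1 (hdvd (m + 1)) m (by omega)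
  exact sub_eq_zero.1 this

lemma F_surj : Function.Surjective (F k α β) := by
  intro x
  choose a ha using fun n => Submodule.Quotient.mk_surjective
    (((JJ k α β) ^ n • ⊤ : Submodule (AA k α β) (AA k α β))) (x.val n)
  refine ⟨PowerSeries.mk (fun p => PowerSeries.coeff p ((a (p+1) : Rstar k))), ?_⟩
  apply AdicCompletion.ext
  intro n
  have hxv : x.val n = Submodule.Quotient.mk (a n) := (ha n).symm
  rw [show (F k α β) (PowerSeries.mk (fun p => PowerSeries.coeff p ((a (p+1) : Rstar k))))
      = Ffun k α β _ from rfl, Ffun_val, hxv]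
  apply mk_eq_mk_of_dvd
  rw [PowerSeries.X_pow_dvd_iff]
  intro m hm
  have hcompat : (PowerSeries.X : Rstar k) ^ (m + 1) ∣ ((a n : Rstar k) - (a (m+1) : Rstar k)) := by
    have h1 := x.2 (show m + 1 ≤ n by omega)
    rw [hxv, transition_mk] at h1
    have h2 := (Submodule.Quotient.eq _).1 (h1.trans (ha (m+1)).symm)
    rw [mem_smul_top_iff] at h2
    have h3 : ((a n - a (m+1) : AA k α β) : Rstar k)
        = (a n : Rstar k) - (a (m+1) : Rstar k) := by
      push_cast
      ring
    rwa [h3] at h2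
  have hcm : PowerSeries.coeff m ((a n : Rstar k))
      = PowerSeries.coeff m ((a (m+1) : Rstar k)) := by
    have := PowerSeries.X_pow_dvd_iff.1 hcompat m (by omega)
    rw [map_sub, sub_eq_zero] at this
    exact this
  have hgoal : ((TA k α β n (PowerSeries.mk
        (fun p => PowerSeries.coeff p ((a (p+1) : Rstar k)))) : Rstar k)
      - ((a n : AA k α β) : Rstar k)) = TT k n (PowerSeries.mk
        (fun p => PowerSeries.coeff p ((a (p+1) : Rstar k)))) - (a n : Rstar k) := rfl
  rw [hgoal, map_sub, coeff_TT, if_pos hm, PowerSeries.coeff_mk, hcm, sub_self]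

lemma F_of (a : AA k α β) : F k α β (a : Rstar k)
    = algebraMap (AA k α β) (AdicCompletion (JJ k α β) (AA k α β)) a := by
  apply AdicCompletion.ext
  intro n
  rw [show F k α β (a : Rstar k) = Ffun k α β (a : Rstar k) from rfl,
    Ffun_eq_of_mem k α β _ a.2 n]
  rfl

/-- The `(xA)`-adic completion `A*` of `A` is (canonically isomorphic to)
`R* = k[y,z]_{(y,z)}[[x]]`, and the extension `P A* = (f,g)R*` is not integrally closed. -/
theorem xA_adic_completion_eq_Rstar_and_PAstar_not_integrally_closed [CharZero k]
    (hα : PowerSeries.constantCoeff α = 0) (hβ : PowerSeries.constantCoeff β = 0)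
    (hind : AlgebraicIndependent k ![PowerSeries.X, α, β]) :
    (∃ e : AdicCompletion (Ideal.span {(⟨xx k, xx_mem k α β⟩ : AA k α β)}) (AA k α β) ≃+*
        Rstar k,
      ∀ a : AA k α β, e (algebraMap (AA k α β) _ a) = (a : Rstar k)) ∧
    ¬ IsIntegrallyClosedIdeal (Ideal.map (AA k α β).subtype (PP k α β)) := by
  constructor
  · refine ⟨(RingEquiv.ofBijective (F k α β) ⟨F_inj k α β, F_surj k α β⟩).symm, ?_⟩
    intro a
    rw [show (algebraMap (AA k α β)
        (AdicCompletion (Ideal.span {(⟨xx k, xx_mem k α β⟩ : AA k α β)}) (AA k α β)) a)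
      = algebraMap (AA k α β) (AdicCompletion (JJ k α β) (AA k α β)) a from rfl]
    rw [← F_of k α β a]
    exact (RingEquiv.ofBijective (F k α β) ⟨F_inj k α β, F_surj k α β⟩).symm_apply_apply _
  · exact second_part k α β hα hβ
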